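/- Let s ≥ 2, h = (1,2) and g = (1,3,…,4s−1)(2,4,…,4s) in Sym(4s), G = ⟨h,g⟩, and M = ⟨h, h^g, …, h^{g^{2s−1}}⟩. Then M ≅ C₂^{2s} is normal in G, G/M is cyclic of order 2s generated by gM, and |G| = 2^{2s}·2s. -/

import Mathlib

namespace Stmt8Aux

variable (s : ℕ)

/-- Block index of a point. -/
def bIdx (x : Fin (4 * s)) : Fin (2 * s) := ⟨(x : ℕ) / 2, by have := x.isLt; omega⟩

/-- Block of a point, in `ZMod (2*s)`. -/
def blk (x : Fin (4 * s)) : ZMod (2 * s) := ((x : ℕ) / 2 : ℕ)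

def psiFun (v : Fin (2 * s) → ZMod 2) (x : Fin (4 * s)) : Fin (4 * s) :=
  ⟨2 * ((x : ℕ) / 2) + (((x : ℕ) % 2 + (v (bIdx s x)).val) % 2), by
    have := x.isLt; omega⟩

lemma psiFun_val (v : Fin (2 * s) → ZMod 2) (x : Fin (4 * s)) :
    (psiFun s v x : ℕ) = 2 * ((x : ℕ) / 2) + (((x : ℕ) % 2 + (v (bIdx s x)).val) % 2) := rfl

lemma bIdx_psiFun (v : Fin (2 * s) → ZMod 2) (x : Fin (4 * s)) :
    bIdx s (psiFun s v x) = bIdx s x := by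
  apply Fin.ext
  show (psiFun s v x : ℕ) / 2 = (x : ℕ) / 2
  rw [psiFun_val]; omega

lemma psiFun_involutive (v : Fin (2 * s) → ZMod 2) : Function.Involutive (psiFun s v) := by
  intro x
  apply Fin.ext
  rw [psiFun_val, bIdx_psiFun, psiFun_val]
  have h1 : (v (bIdx s x)).val < 2 := ZMod.val_lt _
  omega

def psi (v : Fin (2 * s) → ZMod 2) : Equiv.Perm (Fin (4 * s)) :=
  (psiFun_involutive s v).toPerm

lemma psi_val (v : Fin (2 * s) → ZMod 2) (x : Fin (4 * s)) :
    (psi s v x : ℕ) = 2 * ((x : ℕ) / 2) + (((x : ℕ) % 2 + (v (bIdx s x)).val) % 2) := rfl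

lemma bIdx_psi (v : Fin (2 * s) → ZMod 2) (x : Fin (4 * s)) :
    bIdx s (psi s v x) = bIdx s x := bIdx_psiFun s v x

lemma psi_add (v w : Fin (2 * s) → ZMod 2) : psi s (v + w) = psi s v * psi s w := by
  apply Equiv.ext
  intro x
  apply Fin.ext
  show (psi s (v + w) x : ℕ) = (psi s v (psi s w x) : ℕ)
  rw [psi_val, psi_val, bIdx_psi, psi_val]
  have h1 : (v (bIdx s x)).val < 2 := ZMod.val_lt _
  have h2 : (w (bIdx s x)).val < 2 := ZMod.val_lt _
  have h3 : ((v + w) (bIdx s x)).val = ((v (bIdx s x)).val + (w (bIdx s x)).val) % 2 := by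
    simp [Pi.add_apply, ZMod.val_add]
  rw [h3]
  omega

/-- The monoid hom from `Multiplicative (Fin (2*s) → ZMod 2)` into the permutation group. -/
def Psi : Multiplicative (Fin (2 * s) → ZMod 2) →* Equiv.Perm (Fin (4 * s)) where
  toFun v := psi s v.toAdd
  map_one' := by
    apply Equiv.ext; intro x; apply Fin.ext
    show ((psi s (Multiplicative.toAdd (1:Multiplicative (Fin (2*s) → ZMod 2)))) x : ℕ) = (x : ℕ)
    rw [psi_val]
    have h0 : Multiplicative.toAdd (1:Multiplicative (Fin (2*s) → ZMod 2)) (bIdx s x) = 0 := rfl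
    rw [h0]
    simp [ZMod.val_zero]
    omega
  map_mul' v w := psi_add s v.toAdd w.toAdd

lemma Psi_injective : Function.Injective (Psi s) := by
  intro v w hvw
  have : ∀ j : Fin (2 * s), v.toAdd j = w.toAdd j := by
    intro j
    have hj : 2 * (j : ℕ) < 4 * s := by have := j.isLt; omega
    have hx := congrArg (fun e : Equiv.Perm (Fin (4*s)) => (e ⟨2*j, hj⟩ : ℕ)) hvw
    simp only [Psi, MonoidHom.coe_mk, OneHom.coe_mk] at hx
    rw [psi_val, psi_val] at hx
    have hb : bIdx s ⟨2*j, hj⟩ = j := by apply Fin.ext; show (2*(j:ℕ))/2 = j; omega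
    rw [hb] at hx
    have h1 : (v.toAdd j).val < 2 := ZMod.val_lt _
    have h2 : (w.toAdd j).val < 2 := ZMod.val_lt _
    have : (v.toAdd j).val = (w.toAdd j).val := by omega
    exact ZMod.val_injective _ this
  have : v.toAdd = w.toAdd := funext this
  exact Multiplicative.toAdd.injective this

end Stmt8Aux

namespace Stmt8Aux

section G
variable (s : ℕ) (hs : 2 ≤ s) (g : Equiv.Perm (Fin (4 * s)))
  (hg : ∀ i : Fin (4 * s), (g i : ℕ) =
      if (i : ℕ) % 2 = 0 then (if (i : ℕ) = 4 * s - 2 then 0 else (i : ℕ) + 2)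
      else (if (i : ℕ) = 4 * s - 1 then 1 else (i : ℕ) + 2))

include hg

lemma g_spec (x : Fin (4 * s)) :
    (g x : ℕ) % 2 = (x : ℕ) % 2 ∧
      ((x : ℕ) / 2 = 2 * s - 1 → (g x : ℕ) / 2 = 0) ∧
      ((x : ℕ) / 2 ≠ 2 * s - 1 → (g x : ℕ) / 2 = (x : ℕ) / 2 + 1) := by
  have hx := x.isLt
  have h := hg x
  split_ifs at h <;> omega

lemma blk_g (x : Fin (4 * s)) : blk s (g x) = blk s x + 1 := by
  obtain ⟨h1, h2, h3⟩ := g_spec s g hg x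
  unfold blk
  by_cases hc : (x : ℕ) / 2 = 2 * s - 1
  · rw [h2 hc, hc]
    have hx := x.isLt
    have hss : (1 : ℕ) ≤ 2 * s := by omega
    have : ((2 * s - 1 : ℕ) : ZMod (2 * s)) + 1 = ((2 * s - 1 + 1 : ℕ) : ZMod (2 * s)) := by
      push_cast; ring
    rw [this, show 2 * s - 1 + 1 = 2 * s by omega, ZMod.natCast_self, Nat.cast_zero]
  · rw [h3 hc]; push_cast; ring

lemma mod2_gpow (n : ℕ) (x : Fin (4 * s)) : ((g ^ n) x : ℕ) % 2 = (x : ℕ) % 2 := by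
  induction n generalizing x with
  | zero => simp
  | succ n ih =>
    rw [pow_succ, Equiv.Perm.mul_apply, ih]
    exact (g_spec s g hg x).1

lemma blk_gpow (n : ℕ) (x : Fin (4 * s)) : blk s ((g ^ n) x) = blk s x + (n : ZMod (2 * s)) := by
  induction n generalizing x with
  | zero => simp
  | succ n ih =>
    rw [pow_succ, Equiv.Perm.mul_apply, ih, blk_g s g hg]
    push_cast; ring

end G

end Stmt8Aux

namespace Stmt8Aux

section Main
variable (s : ℕ) (hs : 2 ≤ s)

lemma natEq_of_castEq {a b : ℕ} (ha : a < 2 * s) (hb : b < 2 * s)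
    (h : (a : ZMod (2 * s)) = (b : ZMod (2 * s))) : a = b := by
  have := congrArg ZMod.val h
  rwa [ZMod.val_natCast_of_lt ha, ZMod.val_natCast_of_lt hb] at this

variable (g : Equiv.Perm (Fin (4 * s)))
  (hg : ∀ i : Fin (4 * s), (g i : ℕ) =
      if (i : ℕ) % 2 = 0 then (if (i : ℕ) = 4 * s - 2 then 0 else (i : ℕ) + 2)
      else (if (i : ℕ) = 4 * s - 1 then 1 else (i : ℕ) + 2))

include hs hg

lemma gpow_zero_val (i : ℕ) (hi : i < 2 * s) (r : ℕ) (hr : r < 2)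
    (hrs : r < 4 * s) :
    (((g ^ i) ⟨r, hrs⟩ : Fin (4 * s)) : ℕ) = 2 * i + r := by
  set x : Fin (4 * s) := ⟨r, hrs⟩
  have hmod : ((g ^ i) x : ℕ) % 2 = r := by
    rw [mod2_gpow s g hg]; show r % 2 = r; omega
  have hblk : blk s ((g ^ i) x) = (i : ZMod (2 * s)) := by
    rw [blk_gpow s g hg]
    have : blk s x = 0 := by
      unfold blk; show ((r / 2 : ℕ) : ZMod (2 * s)) = 0
      rw [show r / 2 = 0 by omega]; simp
    rw [this, zero_add]
  have hdiv : ((g ^ i) x : ℕ) / 2 = i := by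
    have hlt := ((g ^ i) x).isLt
    exact natEq_of_castEq s (by omega) hi hblk
  omega

lemma conj_eq_psi_single (h : Equiv.Perm (Fin (4 * s)))
    (hh : h = Equiv.swap ⟨0, by linarith⟩ ⟨1, by linarith⟩) (i : Fin (2 * s)) :
    g ^ (i : ℕ) * h * (g ^ (i : ℕ))⁻¹ = psi s (Pi.single i 1) := by
  have hi := i.isLt
  rw [hh, ← Equiv.swap_apply_apply]
  have h0 : ((g ^ (i : ℕ)) ⟨0, by omega⟩ : Fin (4 * s)) = ⟨2 * i, by omega⟩ := by
    apply Fin.ext; rw [gpow_zero_val s hs g hg i hi 0 (by omega)]; simp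
  have h1 : ((g ^ (i : ℕ)) ⟨1, by omega⟩ : Fin (4 * s)) = ⟨2 * i + 1, by omega⟩ := by
    apply Fin.ext; rw [gpow_zero_val s hs g hg i hi 1 (by omega)]
  rw [h0, h1]
  apply Equiv.ext
  intro x
  apply Fin.ext
  have hx := x.isLt
  by_cases hc : bIdx s x = i
  · have hcv : (x : ℕ) / 2 = i := congrArg Fin.val hc
    rw [psi_val, hc, Pi.single_eq_same, ZMod.val_one, Equiv.swap_apply_def]
    split_ifs with H1 H2
    · have := congrArg Fin.val H1
      simp only at this ⊢
      omega
    · have := congrArg Fin.val H2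
      simp only at this ⊢
      omega
    · exfalso
      have hv1 : (x : ℕ) ≠ 2 * (i : ℕ) := fun hv => H1 (Fin.ext hv)
      have hv2 : (x : ℕ) ≠ 2 * (i : ℕ) + 1 := fun hv => H2 (Fin.ext hv)
      omega
  · have hcv : (x : ℕ) / 2 ≠ i := fun hv => hc (Fin.ext hv)
    rw [psi_val, Pi.single_eq_of_ne hc, ZMod.val_zero, Equiv.swap_apply_def]
    split_ifs with H1 H2
    · have := congrArg Fin.val H1; simp only at this; omega
    · have := congrArg Fin.val H2; simp only at this; omega
    · omega

end Main

end Stmt8Aux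

namespace Stmt8Aux

section Part3
variable (s : ℕ)

lemma blk_eq_cast_bIdx (x : Fin (4 * s)) : blk s x = ((bIdx s x : ℕ) : ZMod (2 * s)) := rfl

lemma blk_psi (v : Fin (2 * s) → ZMod 2) (x : Fin (4 * s)) : blk s (psi s v x) = blk s x := by
  rw [blk_eq_cast_bIdx, blk_eq_cast_bIdx, bIdx_psi]

lemma psi_zero : psi s (0 : Fin (2 * s) → ZMod 2) = 1 := by
  apply Equiv.ext; intro x; apply Fin.ext
  have hx := x.isLt
  rw [psi_val]
  have h0 : ((0 : Fin (2 * s) → ZMod 2) (bIdx s x)).val = 0 := rfl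
  rw [h0, Equiv.Perm.one_apply]
  omega

lemma blockPres_mem_range (σ : Equiv.Perm (Fin (4 * s)))
    (hσ : ∀ x, bIdx s (σ x) = bIdx s x) : σ ∈ (Psi s).range := by
  refine ⟨Multiplicative.ofAdd (fun j : Fin (2 * s) =>
    (((σ ⟨2 * (j : ℕ), by have := j.isLt; omega⟩ : Fin (4 * s)) : ℕ) : ZMod 2)), ?_⟩
  apply Equiv.ext; intro x; apply Fin.ext
  have hx := x.isLt
  have key : ∀ (pf : 2 * ((x : ℕ) / 2) < 4 * s) (pfq : 2 * ((x : ℕ) / 2) + 1 < 4 * s),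
      2 * ((x : ℕ) / 2) + (((x : ℕ) % 2 +
        ((((σ ⟨2 * ((x : ℕ) / 2), pf⟩ : Fin (4 * s)) : ℕ) : ZMod 2)).val) % 2) = (σ x : ℕ) := by
    intro pf pfq
    have hval : ((((σ ⟨2 * ((x : ℕ) / 2), pf⟩ : Fin (4 * s)) : ℕ) : ZMod 2)).val
        = ((σ ⟨2 * ((x : ℕ) / 2), pf⟩ : Fin (4 * s)) : ℕ) % 2 := ZMod.val_natCast _ _
    rw [hval]
    have hP : ((σ (⟨2 * ((x : ℕ) / 2), pf⟩ : Fin (4 * s)) : Fin (4 * s)) : ℕ) / 2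
        = (2 * ((x : ℕ) / 2)) / 2 := congrArg Fin.val (hσ _)
    have hQ : ((σ (⟨2 * ((x : ℕ) / 2) + 1, pfq⟩ : Fin (4 * s)) : Fin (4 * s)) : ℕ) / 2
        = (2 * ((x : ℕ) / 2) + 1) / 2 := congrArg Fin.val (hσ _)
    have hPlt := (σ (⟨2 * ((x : ℕ) / 2), pf⟩ : Fin (4 * s))).isLt
    have hQlt := (σ (⟨2 * ((x : ℕ) / 2) + 1, pfq⟩ : Fin (4 * s))).isLt
    have hne : ((σ (⟨2 * ((x : ℕ) / 2), pf⟩ : Fin (4 * s)) : Fin (4 * s)) : ℕ)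
        ≠ ((σ (⟨2 * ((x : ℕ) / 2) + 1, pfq⟩ : Fin (4 * s)) : Fin (4 * s)) : ℕ) := by
      intro he
      have h2 := σ.injective (Fin.ext he)
      have h3 : 2 * ((x : ℕ) / 2) = 2 * ((x : ℕ) / 2) + 1 := congrArg Fin.val h2
      omega
    rcases (show (x : ℕ) % 2 = 0 ∨ (x : ℕ) % 2 = 1 by omega) with hm | hm
    · have hxeq : (σ x : ℕ) = ((σ (⟨2 * ((x : ℕ) / 2), pf⟩ : Fin (4 * s)) : Fin (4 * s)) : ℕ) :=
        congrArg Fin.val (congrArg σ (Fin.ext (show (x : ℕ) = 2 * ((x : ℕ) / 2) by omega)))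
      omega
    · have hxeq : (σ x : ℕ) = ((σ (⟨2 * ((x : ℕ) / 2) + 1, pfq⟩ : Fin (4 * s)) : Fin (4 * s)) : ℕ) :=
        congrArg Fin.val (congrArg σ (Fin.ext (show (x : ℕ) = 2 * ((x : ℕ) / 2) + 1 by omega)))
      omega
  exact key (by omega) (by omega)

lemma psi_mem_closure (v : Fin (2 * s) → ZMod 2) :
    psi s v ∈ Subgroup.closure
      {x : Equiv.Perm (Fin (4 * s)) | ∃ i : Fin (2 * s), x = psi s (Pi.single i 1)} := by
  classical
  suffices H : ∀ (S : Finset (Fin (2 * s))) (v : Fin (2 * s) → ZMod 2), (∀ j ∉ S, v j = 0) →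
      psi s v ∈ Subgroup.closure
        {x : Equiv.Perm (Fin (4 * s)) | ∃ i : Fin (2 * s), x = psi s (Pi.single i 1)} by
    exact H Finset.univ v (by simp)
  intro S
  induction S using Finset.induction_on with
  | empty =>
    intro v hv
    have hv0 : v = 0 := funext fun j => hv j (by simp)
    rw [hv0, psi_zero]
    exact one_mem _
  | insert a S ha ih =>
    intro v hv
    have hsplit : v = Pi.single a (v a) + Function.update v a 0 := by
      funext j
      by_cases hj : j = a
      · subst hj; simp
      · simp [Pi.single_eq_of_ne hj, Function.update_of_ne hj]
    rw [hsplit, psi_add]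
    apply mul_mem
    · have h01 : v a = 0 ∨ v a = 1 := by
        have : ∀ c : ZMod 2, c = 0 ∨ c = 1 := by decide
        exact this _
      rcases h01 with h0 | h1
      · rw [h0]
        have hz : (Pi.single a (0 : ZMod 2) : Fin (2*s) → ZMod 2) = 0 := by
          funext j; by_cases hj : j = a
          · subst hj; simp
          · simp [Pi.single_eq_of_ne hj]
        rw [hz, psi_zero]
        exact one_mem _
      · rw [h1]
        exact Subgroup.subset_closure ⟨a, rfl⟩
    · refine ih (Function.update v a 0) (fun j hj => ?_)
      by_cases hja : j = a
      · subst hja; simp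
      · rw [Function.update_of_ne hja]
        exact hv j (by simp [hja, hj])

end Part3

end Stmt8Aux

namespace Stmt8Aux

section Part4
variable (s : ℕ) (hs : 2 ≤ s)
variable (h g : Equiv.Perm (Fin (4 * s)))
  (hh : h = Equiv.swap ⟨0, by linarith⟩ ⟨1, by linarith⟩)
  (hg : ∀ i : Fin (4 * s), (g i : ℕ) =
      if (i : ℕ) % 2 = 0 then (if (i : ℕ) = 4 * s - 2 then 0 else (i : ℕ) + 2)
      else (if (i : ℕ) = 4 * s - 1 then 1 else (i : ℕ) + 2))

include hs hh in
lemma blk_h (x : Fin (4 * s)) : blk s (h x) = blk s x := by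
  have hx := x.isLt
  rw [hh, Equiv.swap_apply_def]
  split_ifs with H1 H2
  · have hval : (x : ℕ) = 0 := congrArg Fin.val H1
    unfold blk
    congr 1
    show (1 : ℕ) / 2 = (x : ℕ) / 2
    omega
  · have hval : (x : ℕ) = 1 := congrArg Fin.val H2
    unfold blk
    congr 1
    show (0 : ℕ) / 2 = (x : ℕ) / 2
    omega
  · rfl

include hs hh hg in
lemma aff_of_mem (σ : Equiv.Perm (Fin (4 * s)))
    (hσ : σ ∈ Subgroup.closure ({h, g} : Set (Equiv.Perm (Fin (4 * s))))) :
    ∃ k : ZMod (2 * s), ∀ x, blk s (σ x) = blk s x + k := by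
  induction hσ using Subgroup.closure_induction with
  | mem x hx =>
    rcases hx with hx | hx
    · exact ⟨0, fun y => by rw [hx, blk_h s hs h hh]; ring⟩
    · refine ⟨1, fun y => ?_⟩
      rw [show x = g from hx]
      exact blk_g s g hg y
  | one => exact ⟨0, fun y => by simp⟩
  | mul x y _ _ hx hy =>
    obtain ⟨kx, hkx⟩ := hx
    obtain ⟨ky, hky⟩ := hy
    refine ⟨ky + kx, fun z => ?_⟩
    rw [Equiv.Perm.mul_apply, hkx, hky]
    ring
  | inv x _ hx =>
    obtain ⟨kx, hkx⟩ := hx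
    refine ⟨-kx, fun z => ?_⟩
    have h1 := hkx (x⁻¹ z)
    rw [show x (x⁻¹ z) = z from Equiv.apply_symm_apply x z] at h1
    linear_combination -h1

end Part4

end Stmt8Aux

open Stmt8Aux


/-- Let `s ≥ 2`, `h = (1,2)` and `g = (1,3,…,4s−1)(2,4,…,4s)` in `Sym(4s)`, `G = ⟨h,g⟩`, and
`M = ⟨h, h^g, …, h^{g^{2s−1}}⟩`. Then `M ≅ C₂^{2s}` is normal in `G`, `G/M` is cyclic of
order `2s` generated by `gM`, and `|G| = 2^{2s}·2s`.

Here `Sym(4s)` is realized as `Equiv.Perm (Fin (4s))` with points `0,…,4s−1` corresponding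
to `1,…,4s`. Since the paper composes permutations left-to-right while Mathlib's
`Equiv.Perm` composes right-to-left, the paper's conjugate `h^{g^i} = g^{-i} h g^{i}` is
`g^i * h * (g^i)⁻¹` here. -/
theorem stmt8 (s : ℕ) (hs : 2 ≤ s)
    (h g : Equiv.Perm (Fin (4 * s)))
    (hh : h = Equiv.swap ⟨0, by omega⟩ ⟨1, by omega⟩)
    (hg : ∀ i : Fin (4 * s), (g i : ℕ) =
      if (i : ℕ) % 2 = 0 then (if (i : ℕ) = 4 * s - 2 then 0 else (i : ℕ) + 2)
      else (if (i : ℕ) = 4 * s - 1 then 1 else (i : ℕ) + 2)) :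
    Nonempty
      (↥(Subgroup.closure {x : Equiv.Perm (Fin (4 * s)) |
          ∃ i : Fin (2 * s), x = g ^ (i : ℕ) * h * (g ^ (i : ℕ))⁻¹}) ≃*
        Multiplicative (Fin (2 * s) → ZMod 2)) ∧
    Subgroup.closure {x : Equiv.Perm (Fin (4 * s)) |
        ∃ i : Fin (2 * s), x = g ^ (i : ℕ) * h * (g ^ (i : ℕ))⁻¹} ≤
      Subgroup.closure {h, g} ∧
    (∀ r ∈ Subgroup.closure ({h, g} : Set (Equiv.Perm (Fin (4 * s)))),
      ∀ x ∈ Subgroup.closure {x : Equiv.Perm (Fin (4 * s)) |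
          ∃ i : Fin (2 * s), x = g ^ (i : ℕ) * h * (g ^ (i : ℕ))⁻¹},
        r * x * r⁻¹ ∈ Subgroup.closure {x : Equiv.Perm (Fin (4 * s)) |
          ∃ i : Fin (2 * s), x = g ^ (i : ℕ) * h * (g ^ (i : ℕ))⁻¹}) ∧
    (∃ φ : ↥(Subgroup.closure ({h, g} : Set (Equiv.Perm (Fin (4 * s))))) →*
        Multiplicative (ZMod (2 * s)),
      Function.Surjective φ ∧
      φ.ker = (Subgroup.closure {x : Equiv.Perm (Fin (4 * s)) |
          ∃ i : Fin (2 * s), x = g ^ (i : ℕ) * h * (g ^ (i : ℕ))⁻¹}).subgroupOf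
        (Subgroup.closure {h, g}) ∧
      Subgroup.zpowers (φ ⟨g, Subgroup.subset_closure (by simp)⟩) = ⊤) ∧
    Nat.card ↥(Subgroup.closure ({h, g} : Set (Equiv.Perm (Fin (4 * s))))) =
      2 ^ (2 * s) * (2 * s) := by
  classical
  haveI : NeZero (2 * s) := ⟨by omega⟩
  set Mset : Set (Equiv.Perm (Fin (4 * s))) :=
    {x | ∃ i : Fin (2 * s), x = g ^ (i : ℕ) * h * (g ^ (i : ℕ))⁻¹} with hMsetDef
  have hsetEq : Mset = {x | ∃ i : Fin (2 * s), x = psi s (Pi.single i 1)} := by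
    ext y
    constructor
    · rintro ⟨i, rfl⟩; exact ⟨i, conj_eq_psi_single s hs g hg h hh i⟩
    · rintro ⟨i, rfl⟩; exact ⟨i, (conj_eq_psi_single s hs g hg h hh i).symm⟩
  have hM : Subgroup.closure Mset = (Psi s).range := by
    rw [hsetEq]
    apply le_antisymm
    · rw [Subgroup.closure_le]
      rintro y ⟨i, rfl⟩
      exact ⟨Multiplicative.ofAdd (Pi.single i 1), rfl⟩
    · rintro y ⟨w, rfl⟩
      exact psi_mem_closure s w.toAdd
  have hgG : g ∈ Subgroup.closure ({h, g} : Set (Equiv.Perm (Fin (4 * s)))) :=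
    Subgroup.subset_closure (by simp)
  have hhG : h ∈ Subgroup.closure ({h, g} : Set (Equiv.Perm (Fin (4 * s)))) :=
    Subgroup.subset_closure (by simp)
  have hMG : Subgroup.closure Mset ≤ Subgroup.closure {h, g} := by
    rw [Subgroup.closure_le]
    rintro y ⟨i, rfl⟩
    exact mul_mem (mul_mem (pow_mem hgG _) hhG) (inv_mem (pow_mem hgG _))
  have hbIdx : ∀ x y : Fin (4 * s), blk s x = blk s y → bIdx s x = bIdx s y := by
    intro x y hxy
    exact Fin.ext (natEq_of_castEq s (bIdx s x).isLt (bIdx s y).isLt hxy)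
  -- normality
  have hnormal : ∀ r ∈ Subgroup.closure ({h, g} : Set (Equiv.Perm (Fin (4 * s)))),
      ∀ x ∈ Subgroup.closure Mset, r * x * r⁻¹ ∈ Subgroup.closure Mset := by
    intro r hr x hx
    rw [hM] at hx ⊢
    obtain ⟨w, rfl⟩ := hx
    obtain ⟨k, hk⟩ := aff_of_mem s hs h g hh hg r hr
    apply blockPres_mem_range
    intro y
    apply hbIdx
    have e1 : (r * Psi s w * r⁻¹) y = r (Psi s w (r⁻¹ y)) := rfl
    have e3 : blk s (Psi s w (r⁻¹ y)) = blk s (r⁻¹ y) := blk_psi s w.toAdd _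
    rw [e1, hk, e3]
    have e2 := hk (r⁻¹ y)
    rw [show r (r⁻¹ y) = y from Equiv.apply_symm_apply r y] at e2
    linear_combination -e2
  -- the homomorphism
  obtain ⟨z0, hz0⟩ : ∃ z0 : Fin (4 * s), (z0 : ℕ) = 0 := ⟨⟨0, by omega⟩, rfl⟩
  have hblkz0 : blk s z0 = 0 := by
    unfold blk
    rw [hz0]
    norm_num
  set φ : ↥(Subgroup.closure ({h, g} : Set (Equiv.Perm (Fin (4 * s))))) →*
      Multiplicative (ZMod (2 * s)) :=
    MonoidHom.mk' (fun σ => Multiplicative.ofAdd (blk s (σ.1 z0))) (by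
      intro a b
      obtain ⟨k, hk⟩ := aff_of_mem s hs h g hh hg a.1 a.2
      show Multiplicative.ofAdd (blk s ((a.1 * b.1) z0))
          = Multiplicative.ofAdd (blk s (a.1 z0)) * Multiplicative.ofAdd (blk s (b.1 z0))
      rw [← ofAdd_add]
      apply congrArg
      rw [show (a.1 * b.1) z0 = a.1 (b.1 z0) from rfl, hk, hk, hblkz0]
      ring) with hφDef
  have hφsurj : Function.Surjective φ := by
    intro y
    refine ⟨⟨g ^ (y.toAdd.val), pow_mem hgG _⟩, ?_⟩
    show Multiplicative.ofAdd (blk s ((g ^ (y.toAdd.val)) z0)) = y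
    rw [blk_gpow s g hg, hblkz0, zero_add, ZMod.natCast_zmod_val]
    exact ofAdd_toAdd y
  have hker : φ.ker = (Subgroup.closure Mset).subgroupOf (Subgroup.closure {h, g}) := by
    ext σ
    rw [MonoidHom.mem_ker, Subgroup.mem_subgroupOf]
    constructor
    · intro hσ
      have hblk0 : blk s (σ.1 z0) = 0 := congrArg Multiplicative.toAdd hσ
      obtain ⟨k, hk⟩ := aff_of_mem s hs h g hh hg σ.1 σ.2
      have hk0 : k = 0 := by
        have e := hk z0
        rw [hblkz0, zero_add] at e
        exact e.symm.trans hblk0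
      rw [hM]
      apply blockPres_mem_range
      intro y
      apply hbIdx
      rw [hk y, hk0, add_zero]
    · intro hσ
      rw [hM] at hσ
      obtain ⟨w, hw⟩ := hσ
      show Multiplicative.ofAdd (blk s (σ.1 z0)) = 1
      have e : blk s (σ.1 z0) = 0 := by
        rw [← hw]
        exact (blk_psi s w.toAdd z0).trans hblkz0
      rw [e]
      rfl
  have hzp : Subgroup.zpowers (φ ⟨g, Subgroup.subset_closure (by simp)⟩) = ⊤ := by
    have hφg : φ ⟨g, Subgroup.subset_closure (by simp)⟩
        = Multiplicative.ofAdd (1 : ZMod (2 * s)) := by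
      show Multiplicative.ofAdd (blk s (g z0)) = _
      rw [blk_g s g hg, hblkz0, zero_add]
    rw [hφg, Subgroup.eq_top_iff']
    intro y
    rw [Subgroup.mem_zpowers_iff]
    refine ⟨(y.toAdd.val : ℤ), ?_⟩
    rw [zpow_natCast]
    apply Multiplicative.toAdd.injective
    rw [toAdd_pow, toAdd_ofAdd, nsmul_eq_mul, mul_one, ZMod.natCast_zmod_val]
  have isoM : ↥(Subgroup.closure Mset) ≃* Multiplicative (Fin (2 * s) → ZMod 2) :=
    (MulEquiv.subgroupCongr hM).trans (MonoidHom.ofInjective (Psi_injective s)).symm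
  have hcard : Nat.card ↥(Subgroup.closure ({h, g} : Set (Equiv.Perm (Fin (4 * s)))))
      = 2 ^ (2 * s) * (2 * s) := by
    have h1 := Subgroup.card_eq_card_quotient_mul_card_subgroup φ.ker
    have h2 : Nat.card (↥(Subgroup.closure ({h, g} : Set (Equiv.Perm (Fin (4 * s))))) ⧸ φ.ker)
        = 2 * s := by
      rw [Nat.card_congr (QuotientGroup.quotientKerEquivOfSurjective φ hφsurj).toEquiv,
        Nat.card_congr Multiplicative.toAdd, Nat.card_zmod]
    have h3 : Nat.card φ.ker = 2 ^ (2 * s) := by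
      rw [hker, Nat.card_congr (Subgroup.subgroupOfEquivOfLe hMG).toEquiv,
        Nat.card_congr isoM.toEquiv, Nat.card_congr Multiplicative.toAdd,
        Nat.card_eq_fintype_card, Fintype.card_fun]
      simp
    rw [h1, h2, h3, Nat.mul_comm]
  exact ⟨⟨isoM⟩, hMG, hnormal, ⟨φ, hφsurj, hker, hzp⟩, hcard⟩
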